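/- Let H be a k-uniform hypergraph and let d ≥ 2 be an integer. The toric ideal I_H is generated in degree at most d if and only if for every primitive balanced edge set 𝓔 of H with |𝓔_blue| = |𝓔_red| = n > d, one of the following two conditions holds: (i) there exists a proper splitting set of 𝓔; or (ii) there exist an integer N ≥ 1, balanced edge sets 𝓦_0 = 𝓔, 𝓦_1, …, 𝓦_N, and for each 1 ≤ i ≤ N a multiset S_i that is a blue splitting set of 𝓦_{i−1} of size less than n with decomposition (Γ1_i, S_i, Γ2_i), and a multiset R_i that is a red splitting set of 𝓦_{i−1} of size less than n with decomposition (Υ1_i, R_i, Υ2_i), such that 𝓦_i = ((Γ2_i)_blue, (Υ1_i)_red) for each 1 ≤ i ≤ N, and either S_N ∩ R_N ≠ ∅ or there exists a proper splitting set of 𝓦_N. -/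

import Mathlib

open MvPolynomial

namespace ToricHG

variable (K : Type) [Field K] (V : Type) [Fintype V] [DecidableEq V]

/-- The edges of a hypergraph with edge set `E`, as a type. -/
abbrev Edge (E : Finset (Finset V)) : Type := {e : Finset V // e ∈ E}

/-- The monomial map `t_e ↦ ∏_{v ∈ e} x_v`. -/
noncomputable def phiH (E : Finset (Finset V)) :
    MvPolynomial (Edge V E) K →ₐ[K] MvPolynomial V K :=
  aeval (fun e : Edge V E => ∏ v ∈ e.1, (X v : MvPolynomial V K))

/-- The toric ideal of a hypergraph. -/
noncomputable def toricIdeal (E : Finset (Finset V)) :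
    Ideal (MvPolynomial (Edge V E) K) :=
  RingHom.ker (phiH K V E).toRingHom

/-- The number of edges of the multiset `M` containing `v`, counted with multiplicity. -/
def degIn (E : Finset (Finset V)) (v : V) (M : Multiset (Edge V E)) : ℕ :=
  Multiset.card (M.filter (fun e => v ∈ e.1))

/-- The bicolored edge multiset `(B, R)` is balanced. -/
def Balanced (E : Finset (Finset V)) (B R : Multiset (Edge V E)) : Prop :=
  ∀ v : V, degIn V E v B = degIn V E v R

/-- The binomial arising from the bicolored edge multiset `(B, R)`. -/
noncomputable def binom (E : Finset (Finset V)) (B R : Multiset (Edge V E)) :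
    MvPolynomial (Edge V E) K :=
  (B.map fun e => (X e : MvPolynomial (Edge V E) K)).prod -
    (R.map fun e => (X e : MvPolynomial (Edge V E) K)).prod

/-- The balanced edge set `(B, R)` is primitive. -/
def Primitive (E : Finset (Finset V)) (B R : Multiset (Edge V E)) : Prop :=
  Balanced V E B R ∧
    ¬ ∃ B' R' : Multiset (Edge V E),
        ¬(B' = 0 ∧ R' = 0) ∧ Balanced V E B' R' ∧ B' < B ∧ R' < R

/-- The balanced edge set `(Fb, Fr)` is reducible with separator `S` and
decomposition `((G1b, G1r), S, (G2b, G2r))`. -/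
def ReducibleWith (E : Finset (Finset V))
    (Fb Fr S G1b G1r G2b G2r : Multiset (Edge V E)) : Prop :=
  Balanced V E Fb Fr ∧ S ≠ 0 ∧ S.toFinset ⊆ (Fb + Fr).toFinset ∧
    Balanced V E G1b G1r ∧ Balanced V E G2b G2r ∧
    ¬(G1b = Fb ∧ G1r = Fr) ∧ ¬(G2b = Fb ∧ G2r = Fr) ∧
    S = G1r ∩ G2b ∧ Fb = G1b + G2b ∧ Fr = G1r + G2r

/-- `S` is a splitting set of the balanced edge set `(Eb, Er)` with
decomposition `((G1b, G1r), S, (G2b, G2r))`, i.e. `(Eb, Er) + S` is reducible with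
separator `S` and this decomposition. -/
def SplittingSetWith (E : Finset (Finset V))
    (Eb Er S G1b G1r G2b G2r : Multiset (Edge V E)) : Prop :=
  ReducibleWith V E (Eb + S) (Er + S) S G1b G1r G2b G2r

/-- `S` is a proper splitting set of the balanced edge set `(Eb, Er)`. -/
def ProperSplittingSet (E : Finset (Finset V))
    (Eb Er S : Multiset (Edge V E)) : Prop :=
  ∃ G1b G1r G2b G2r : Multiset (Edge V E),
    SplittingSetWith V E Eb Er S G1b G1r G2b G2r ∧ S < G1r ∧ S < G2b

/-- A binomial: the difference of two distinct monic monomials. -/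
def IsBinomial (E : Finset (Finset V)) (f : MvPolynomial (Edge V E) K) : Prop :=
  ∃ a b : (Edge V E) →₀ ℕ, a ≠ b ∧ f = monomial a 1 - monomial b 1

/-- `f` is an indispensable binomial of the toric ideal of the hypergraph. -/
def Indispensable (E : Finset (Finset V)) (f : MvPolynomial (Edge V E) K) : Prop :=
  ∀ G : Set (MvPolynomial (Edge V E) K),
    (∀ g ∈ G, IsBinomial K V E g) → Ideal.span G = toricIdeal K V E →
      f ∈ G ∨ -f ∈ G

/-- The Graver basis of the toric ideal of the hypergraph: the binomials arising from
primitive balanced edge sets `(B, R)` with `B ≠ R`. -/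
def GraverSet (E : Finset (Finset V)) : Set (MvPolynomial (Edge V E) K) :=
  {f | ∃ B R : Multiset (Edge V E), Primitive V E B R ∧ B ≠ R ∧ f = binom K V E B R}

/-- The ideal `I` is generated in degree at most `d`. -/
def GenInDegLE {σ : Type} (I : Ideal (MvPolynomial σ K)) (d : ℕ) : Prop :=
  I = Ideal.span {f | f ∈ I ∧ f.totalDegree ≤ d}

end ToricHG

namespace ToricHG

variable {K : Type} [Field K] {V : Type} [Fintype V] [DecidableEq V]
variable {E : Finset (Finset V)}

-- ===== auxiliary development =====
set_option linter.unusedSectionVars false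

lemma degIn_add (v : V) (M N : Multiset (Edge V E)) :
    degIn V E v (M + N) = degIn V E v M + degIn V E v N := by
  simp [degIn, Multiset.filter_add]

lemma degIn_cons (v : V) (e : Edge V E) (M : Multiset (Edge V E)) :
    degIn V E v (e ::ₘ M) = (if v ∈ e.1 then 1 else 0) + degIn V E v M := by
  simp [degIn, Multiset.filter_cons]
  split <;> simp

lemma degIn_le (v : V) {M N : Multiset (Edge V E)} (h : M ≤ N) :
    degIn V E v M ≤ degIn V E v N :=
  Multiset.card_le_card (Multiset.filter_le_filter _ h)

lemma degIn_sub (v : V) {M N : Multiset (Edge V E)} (h : N ≤ M) :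
    degIn V E v (M - N) = degIn V E v M - degIn V E v N := by
  simp [degIn, Multiset.filter_sub]
  exact Multiset.card_sub (Multiset.filter_le_filter _ h)

lemma Balanced.symm {B R : Multiset (Edge V E)} (h : Balanced V E B R) :
    Balanced V E R B := fun v => (h v).symm

lemma Balanced.rfl {B : Multiset (Edge V E)} : Balanced V E B B := fun _ => Eq.refl _

lemma Balanced.trans {A B C : Multiset (Edge V E)} (h1 : Balanced V E A B)
    (h2 : Balanced V E B C) : Balanced V E A C := fun v => (h1 v).trans (h2 v)

lemma Balanced.add {A B C D : Multiset (Edge V E)} (h1 : Balanced V E A B)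
    (h2 : Balanced V E C D) : Balanced V E (A + C) (B + D) := fun v => by
  rw [degIn_add, degIn_add, h1 v, h2 v]

lemma Balanced.sub {A B C D : Multiset (Edge V E)} (h1 : Balanced V E A B)
    (h2 : Balanced V E C D) (hCA : C ≤ A) (hDB : D ≤ B) :
    Balanced V E (A - C) (B - D) := fun v => by
  rw [degIn_sub v hCA, degIn_sub v hDB, h1 v, h2 v]

lemma balanced_eq_zero (hE : ∀ e ∈ E, e.Nonempty) {R : Multiset (Edge V E)}
    (h : Balanced V E 0 R) : R = 0 := by
  by_contra hne
  obtain ⟨e, he⟩ := Multiset.exists_mem_of_ne_zero hne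
  obtain ⟨v, hv⟩ := hE e.1 e.2
  have h0 : degIn V E v 0 = 0 := by simp [degIn]
  have h1 : 0 < degIn V E v R := by
    rw [degIn, Multiset.card_pos]
    intro hf
    have : e ∈ Multiset.filter (fun e => v ∈ e.1) R := Multiset.mem_filter.2 ⟨he, hv⟩
    rw [hf] at this; simp at this
  have h2 := h v
  omega

lemma balanced_eq_zero_left (hE : ∀ e ∈ E, e.Nonempty) {B : Multiset (Edge V E)}
    (h : Balanced V E B 0) : B = 0 := balanced_eq_zero hE h.symm

lemma sum_degIn {k : ℕ} (hunif : ∀ e ∈ E, e.card = k) (M : Multiset (Edge V E)) :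
    ∑ v : V, degIn V E v M = k * Multiset.card M := by
  induction M using Multiset.induction with
  | empty => simp [degIn]
  | cons e M ih =>
    have : ∀ v : V, degIn V E v (e ::ₘ M) = (if v ∈ e.1 then 1 else 0) + degIn V E v M :=
      fun v => degIn_cons v e M
    simp only [this, Finset.sum_add_distrib, ih]
    have : (∑ v : V, if v ∈ e.1 then 1 else 0) = e.1.card := by
      rw [Finset.sum_ite_mem, Finset.univ_inter, Finset.card_eq_sum_ones]
    rw [this, hunif e.1 e.2, Multiset.card_cons]
    ring

lemma Balanced.card_eq (hE : ∀ e ∈ E, e.Nonempty) {k : ℕ} (hunif : ∀ e ∈ E, e.card = k)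
    {B R : Multiset (Edge V E)} (h : Balanced V E B R) :
    Multiset.card B = Multiset.card R := by
  by_cases hB : B = 0
  · subst hB
    rw [balanced_eq_zero hE h]
  · obtain ⟨e, he⟩ := Multiset.exists_mem_of_ne_zero hB
    obtain ⟨v, hv⟩ := hE e.1 e.2
    have hk : 0 < k := by
      have := hunif e.1 e.2
      have := Finset.card_pos.2 ⟨v, hv⟩
      omega
    have h1 := sum_degIn hunif B
    have h2 := sum_degIn hunif R
    have h3 : ∑ v : V, degIn V E v B = ∑ v : V, degIn V E v R :=
      Finset.sum_congr (Eq.refl _) (fun v _ => h v)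
    rw [h1, h2] at h3
    exact Nat.eq_of_mul_eq_mul_left hk h3

-- ===== monomials =====

/-- product of X's over a multiset of edges -/
noncomputable def prodX (M : Multiset (Edge V E)) : MvPolynomial (Edge V E) K :=
  (M.map fun e => (X e : MvPolynomial (Edge V E) K)).prod

lemma binom_eq (B R : Multiset (Edge V E)) :
    binom K V E B R = prodX B - prodX R := rfl

lemma prodX_zero : (prodX 0 : MvPolynomial (Edge V E) K) = 1 := by simp [prodX]

lemma prodX_cons (e : Edge V E) (M : Multiset (Edge V E)) :
    (prodX (e ::ₘ M) : MvPolynomial (Edge V E) K) = X e * prodX M := by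
  simp [prodX]

lemma prodX_add (A B : Multiset (Edge V E)) :
    (prodX (A + B) : MvPolynomial (Edge V E) K) = prodX A * prodX B := by
  simp [prodX, Multiset.prod_add]

lemma prodX_singleton (e : Edge V E) :
    (prodX {e} : MvPolynomial (Edge V E) K) = X e := by
  simp [prodX]

lemma toFinsupp_cons (e : Edge V E) (M : Multiset (Edge V E)) :
    Multiset.toFinsupp (e ::ₘ M) = Finsupp.single e 1 + Multiset.toFinsupp M := by
  ext b
  simp only [Multiset.toFinsupp_apply, Multiset.count_cons, Finsupp.add_apply,
    Finsupp.single_apply, eq_comm]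
  split <;> omega

lemma prodX_eq_monomial (M : Multiset (Edge V E)) :
    (prodX M : MvPolynomial (Edge V E) K) = monomial (Multiset.toFinsupp M) 1 := by
  induction M using Multiset.induction with
  | empty =>
    rw [prodX_zero]
    have : Multiset.toFinsupp (0 : Multiset (Edge V E)) = 0 := by simp
    rw [this]
    rfl
  | cons e M ih =>
    rw [prodX_cons, ih, toFinsupp_cons]
    have : (X e : MvPolynomial (Edge V E) K) = monomial (Finsupp.single e 1) 1 := rfl
    rw [this, monomial_mul, one_mul]

/-- the vertex-degree finsupp of an edge -/
noncomputable def nu (e : Edge V E) : V →₀ ℕ := ∑ v ∈ e.1, Finsupp.single v 1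

lemma nu_apply (e : Edge V E) (v : V) : nu e v = if v ∈ e.1 then 1 else 0 := by
  rw [nu, Finsupp.finset_sum_apply]
  simp [Finsupp.single_apply]

/-- vertex-degree finsupp of a multiset of edges -/
noncomputable def pim (M : Multiset (Edge V E)) : V →₀ ℕ := (M.map fun e => nu e).sum

lemma pim_zero : (pim (0 : Multiset (Edge V E))) = 0 := by simp [pim]

lemma pim_cons (e : Edge V E) (M : Multiset (Edge V E)) :
    pim (e ::ₘ M) = nu e + pim M := by simp [pim]

lemma pim_add (A B : Multiset (Edge V E)) : pim (A + B) = pim A + pim B := by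
  simp [pim]

lemma pim_apply (M : Multiset (Edge V E)) (v : V) : pim M v = degIn V E v M := by
  induction M using Multiset.induction with
  | empty => simp [pim_zero, degIn]
  | cons e M ih =>
    rw [pim_cons, degIn_cons, Finsupp.add_apply, nu_apply, ih]

lemma balanced_iff_pim {B R : Multiset (Edge V E)} :
    Balanced V E B R ↔ pim B = pim R := by
  constructor
  · intro h; ext v; rw [pim_apply, pim_apply, h v]
  · intro h v; rw [← pim_apply, ← pim_apply, h]

lemma prod_X_finset (s : Finset V) :
    (∏ v ∈ s, (X v : MvPolynomial V K)) = monomial (∑ v ∈ s, Finsupp.single v 1) 1 := by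
  induction s using Finset.induction with
  | empty => simp
  | @insert a s ha ih =>
    rw [Finset.prod_insert ha, ih, Finset.sum_insert ha]
    have : (X a : MvPolynomial V K) = monomial (Finsupp.single a 1) 1 := rfl
    rw [this, monomial_mul, one_mul]

lemma phi_prodX (M : Multiset (Edge V E)) :
    phiH K V E (prodX M) = monomial (pim M) 1 := by
  induction M using Multiset.induction with
  | empty => rw [prodX_zero, map_one, pim_zero]; rfl
  | cons e M ih =>
    rw [prodX_cons, map_mul, ih, pim_cons]
    have hX : phiH K V E (X e) = ∏ v ∈ e.1, (X v : MvPolynomial V K) := by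
      simp [phiH]
    rw [hX, prod_X_finset]
    rw [show (∑ v ∈ e.1, Finsupp.single v 1) = nu e from rfl, monomial_mul, one_mul]

-- ===== phiH and the kernel =====

noncomputable def pimF (u : Edge V E →₀ ℕ) : V →₀ ℕ := pim (Finsupp.toMultiset u)

lemma toFinsupp_toMultiset (u : Edge V E →₀ ℕ) :
    Multiset.toFinsupp (Finsupp.toMultiset u) = u := by
  rw [← Multiset.toFinsupp_symm_apply, AddEquiv.apply_symm_apply]

lemma toMultiset_toFinsupp (M : Multiset (Edge V E)) :
    Finsupp.toMultiset (Multiset.toFinsupp M) = M := by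
  rw [← Multiset.toFinsupp_symm_apply, AddEquiv.symm_apply_apply]

lemma pimF_toFinsupp (M : Multiset (Edge V E)) :
    pimF (Multiset.toFinsupp M) = pim M := by
  rw [pimF, toMultiset_toFinsupp]

lemma phi_monomial (u : Edge V E →₀ ℕ) (c : K) :
    phiH K V E (monomial u c) = monomial (pimF u) c := by
  have h1 : (monomial u (c : K)) = C c * monomial u 1 := by
    rw [C_mul_monomial, mul_one]
  have h2 : (monomial u (1 : K)) = prodX (Finsupp.toMultiset u) := by
    rw [prodX_eq_monomial, toFinsupp_toMultiset]
  rw [h1, map_mul, h2, phi_prodX]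
  have h3 : phiH K V E (C c) = C c := by
    simp [phiH]
  rw [h3, C_mul_monomial, mul_one, pimF]

lemma mem_toricIdeal_iff {g : MvPolynomial (Edge V E) K} :
    g ∈ toricIdeal K V E ↔ phiH K V E g = 0 := by
  rw [toricIdeal, RingHom.mem_ker]
  rfl

lemma binom_mem_ker {B R : Multiset (Edge V E)} (h : Balanced V E B R) :
    binom K V E B R ∈ toricIdeal K V E := by
  rw [mem_toricIdeal_iff, binom_eq, map_sub, phi_prodX, phi_prodX,
    balanced_iff_pim.1 h, sub_self]

lemma ker_coeff {g : MvPolynomial (Edge V E) K} (hg : g ∈ toricIdeal K V E)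
    (y : V →₀ ℕ) :
    ∑ w ∈ g.support, (if pimF w = y then coeff w g else 0) = 0 := by
  have h0 : phiH K V E g = 0 := mem_toricIdeal_iff.1 hg
  have h1 : phiH K V E g = ∑ w ∈ g.support, monomial (pimF w) (coeff w g) := by
    conv_lhs => rw [as_sum g]
    rw [map_sum]
    exact Finset.sum_congr (Eq.refl _) fun w _ => phi_monomial w (coeff w g)
  have h2 := congrArg (coeff y) h1
  rw [h0] at h2
  rw [coeff_sum] at h2
  simp only [coeff_monomial, coeff_zero] at h2
  exact h2.symm

lemma sum_toFinsupp (M : Multiset (Edge V E)) :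
    ((Multiset.toFinsupp M).sum fun _ n => n) = Multiset.card M := by
  have := Finsupp.card_toMultiset (Multiset.toFinsupp M)
  rw [toMultiset_toFinsupp] at this
  exact this.symm

lemma totalDegree_binom_le {B R : Multiset (Edge V E)} {n : ℕ}
    (hB : Multiset.card B = n) (hR : Multiset.card R = n) :
    (binom K V E B R).totalDegree ≤ n := by
  rw [binom_eq, sub_eq_add_neg]
  refine le_trans (totalDegree_add _ _) ?_
  rw [totalDegree_neg]
  have h1 : (prodX B : MvPolynomial (Edge V E) K).totalDegree ≤ n := by
    rw [prodX_eq_monomial]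
    refine le_trans (le_of_eq (totalDegree_monomial _ one_ne_zero)) ?_
    rw [sum_toFinsupp, hB]
  have h2 : (prodX R : MvPolynomial (Edge V E) K).totalDegree ≤ n := by
    rw [prodX_eq_monomial]
    refine le_trans (le_of_eq (totalDegree_monomial _ one_ne_zero)) ?_
    rw [sum_toFinsupp, hR]
  exact sup_le h1 h2

-- ===== splitting identities =====

lemma le_of_eq_inter {S A B : Multiset (Edge V E)} (h : S = A ∩ B) : S ≤ B :=
  h ▸ Multiset.inter_le_right

lemma le_of_eq_inter' {S A B : Multiset (Edge V E)} (h : S = A ∩ B) : S ≤ A :=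
  h ▸ Multiset.inter_le_left

lemma split_identity {B R S G1b G1r G2b G2r : Multiset (Edge V E)}
    (hS1 : S ≤ G1r) (hS2 : S ≤ G2b)
    (hB : B + S = G1b + G2b) (hR : R + S = G1r + G2r) :
    binom K V E B R =
      prodX (G2b - S) * binom K V E G1b G1r + prodX (G1r - S) * binom K V E G2b G2r := by
  have e1 : G2b - S + G1b = B := by
    apply add_right_cancel (b := S)
    rw [add_right_comm, tsub_add_cancel_of_le hS2, hB, add_comm]
  have e3 : G1r - S + G2r = R := by
    apply add_right_cancel (b := S)
    rw [add_right_comm, tsub_add_cancel_of_le hS1, hR]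
  have e2 : G2b - S + G1r = G1r - S + G2b := by
    apply add_right_cancel (b := S)
    rw [add_right_comm, tsub_add_cancel_of_le hS2, add_right_comm,
      tsub_add_cancel_of_le hS1, add_comm]
  have c1 := congrArg (prodX (K := K) (V := V) (E := E)) e1
  have c2 := congrArg (prodX (K := K) (V := V) (E := E)) e2
  have c3 := congrArg (prodX (K := K) (V := V) (E := E)) e3
  rw [prodX_add] at c1 c3
  rw [prodX_add, prodX_add] at c2
  simp only [binom_eq]
  linear_combination (-1 : MvPolynomial (Edge V E) K) * c1 + c2 + c3

lemma blue_identity {Wb Wr S G1b G2b : Multiset (Edge V E)}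
    (hS : S ≤ G2b) (hB : Wb + S = G1b + G2b) :
    binom K V E Wb Wr - binom K V E G2b Wr = prodX (G2b - S) * binom K V E G1b S := by
  have e1 : G2b - S + G1b = Wb := by
    apply add_right_cancel (b := S)
    rw [add_right_comm, tsub_add_cancel_of_le hS, hB, add_comm]
  have c1 := congrArg (prodX (K := K) (V := V) (E := E)) e1
  have c2 := congrArg (prodX (K := K) (V := V) (E := E)) (tsub_add_cancel_of_le hS)
  rw [prodX_add] at c1
  rw [prodX_add] at c2
  simp only [binom_eq]
  linear_combination (-1 : MvPolynomial (Edge V E) K) * c1 + c2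

lemma red_identity {Wb Wr T U1r U2r : Multiset (Edge V E)}
    (hT : T ≤ U1r) (hR : Wr + T = U1r + U2r) :
    binom K V E Wb Wr - binom K V E Wb U1r = prodX (U1r - T) * binom K V E T U2r := by
  have e1 : U1r - T + U2r = Wr := by
    apply add_right_cancel (b := T)
    rw [add_right_comm, tsub_add_cancel_of_le hT, hR]
  have c1 := congrArg (prodX (K := K) (V := V) (E := E)) e1
  have c2 := congrArg (prodX (K := K) (V := V) (E := E)) (tsub_add_cancel_of_le hT)
  rw [prodX_add] at c1
  rw [prodX_add] at c2
  simp only [binom_eq]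
  linear_combination c1 - c2

lemma single_identity {Wb Wr : Multiset (Edge V E)} {e : Edge V E}
    (h1 : {e} ≤ Wb) (h2 : {e} ≤ Wr) :
    binom K V E Wb Wr = prodX {e} * binom K V E (Wb - {e}) (Wr - {e}) := by
  have c1 := congrArg (prodX (K := K) (V := V) (E := E)) (tsub_add_cancel_of_le h1)
  have c2 := congrArg (prodX (K := K) (V := V) (E := E)) (tsub_add_cancel_of_le h2)
  rw [prodX_add] at c1 c2
  simp only [binom_eq]
  linear_combination c2 - c1

-- ===== the descent (sufficiency) =====

section Descent

variable {k d : ℕ}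
variable (hE : ∀ e ∈ E, e.Nonempty) (hunif : ∀ e ∈ E, e.card = k)

include hE hunif

lemma proper_case {n : ℕ}
    (IH : ∀ m, m < n → ∀ B' R' : Multiset (Edge V E), Balanced V E B' R' →
      Multiset.card B' = m →
      binom K V E B' R' ∈ Ideal.span {f | f ∈ toricIdeal K V E ∧ f.totalDegree ≤ d})
    {Wb Wr S : Multiset (Edge V E)} (hcb : Multiset.card Wb = n)
    (h : ProperSplittingSet V E Wb Wr S) :
    binom K V E Wb Wr ∈ Ideal.span {f | f ∈ toricIdeal K V E ∧ f.totalDegree ≤ d} := by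
  obtain ⟨G1b, G1r, G2b, G2r,
    ⟨hbalF, hSne, hsupp, hbal1, hbal2, hne1, hne2, hSint, hFb, hFr⟩, hlt1, hlt2⟩ := h
  have hS1 : S ≤ G1r := le_of_lt hlt1
  have hS2 : S ≤ G2b := le_of_lt hlt2
  have hid := split_identity (K := K) hS1 hS2 hFb hFr
  have hcr : Multiset.card Wr = n := by
    have h1 := hbalF.card_eq hE hunif
    rw [Multiset.card_add, Multiset.card_add, hcb] at h1
    omega
  have hc1 : Multiset.card G1b + Multiset.card G2b = n + Multiset.card S := by
    have := congrArg Multiset.card hFb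
    rw [Multiset.card_add, Multiset.card_add, hcb] at this
    omega
  have hc2 : Multiset.card G1r + Multiset.card G2r = n + Multiset.card S := by
    have := congrArg Multiset.card hFr
    rw [Multiset.card_add, Multiset.card_add, hcr] at this
    omega
  have hlt1' := Multiset.card_lt_card hlt1
  have hlt2' := Multiset.card_lt_card hlt2
  have hce1 : Multiset.card G1b = Multiset.card G1r := hbal1.card_eq hE hunif
  have hce2 : Multiset.card G2b = Multiset.card G2r := hbal2.card_eq hE hunif
  have hn1 : Multiset.card G1b < n := by omega
  have hn2 : Multiset.card G2b < n := by omega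
  rw [hid]
  exact add_mem
    (Ideal.mul_mem_left _ _ (IH _ hn1 G1b G1r hbal1 rfl))
    (Ideal.mul_mem_left _ _ (IH _ hn2 G2b G2r hbal2 rfl))

lemma descent (hd : 2 ≤ d)
    (Hyp : ∀ (B R : Multiset (Edge V E)) (n : ℕ),
        Primitive V E B R → Multiset.card B = n → Multiset.card R = n → d < n →
        ((∃ S : Multiset (Edge V E), ProperSplittingSet V E B R S) ∨
          (∃ N : ℕ, 1 ≤ N ∧
            ∃ Wb Wr S T G1b G1r G2b G2r U1b U1r U2b U2r : ℕ → Multiset (Edge V E),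
              Wb 0 = B ∧ Wr 0 = R ∧
              (∀ i : ℕ, 1 ≤ i → i ≤ N →
                (SplittingSetWith V E (Wb (i - 1)) (Wr (i - 1)) (S i)
                    (G1b i) (G1r i) (G2b i) (G2r i) ∧
                  G1r i = S i ∧ Multiset.card (S i) < n) ∧
                (SplittingSetWith V E (Wb (i - 1)) (Wr (i - 1)) (T i)
                    (U1b i) (U1r i) (U2b i) (U2r i) ∧
                  U2b i = T i ∧ Multiset.card (T i) < n) ∧
                Wb i = G2b i ∧ Wr i = U1r i) ∧
              (S N ∩ T N ≠ 0 ∨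
                ∃ P : Multiset (Edge V E), ProperSplittingSet V E (Wb N) (Wr N) P)))) :
    ∀ (n : ℕ) (B R : Multiset (Edge V E)), Balanced V E B R → Multiset.card B = n →
      binom K V E B R ∈ Ideal.span {f | f ∈ toricIdeal K V E ∧ f.totalDegree ≤ d} := by
  intro n
  induction n using Nat.strong_induction_on with
  | _ n IH =>
  intro B R hbal hcb
  set J := Ideal.span {f | f ∈ toricIdeal K V E ∧ f.totalDegree ≤ d} with hJ
  have hcr : Multiset.card R = n := by rw [← hcb, (hbal.card_eq hE hunif)]
  by_cases hn : n ≤ d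
  · exact Ideal.subset_span ⟨binom_mem_ker hbal, le_trans (totalDegree_binom_le hcb hcr) hn⟩
  push_neg at hn
  by_cases hprim : Primitive V E B R
  · rcases Hyp B R n hprim hcb hcr hn with h | h
    · obtain ⟨S, hPS⟩ := h
      exact proper_case hE hunif IH hcb hPS
    · obtain ⟨N, hN1, Wb, Wr, S, T, G1b, G1r, G2b, G2r, U1b, U1r, U2b, U2r,
        hW0b, hW0r, hsteps, hfin⟩ := h
      have key : ∀ i, i ≤ N →
          (Multiset.card (Wb i) = n ∧ Multiset.card (Wr i) = n ∧
            Balanced V E (Wb i) (Wr i) ∧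
            binom K V E B R - binom K V E (Wb i) (Wr i) ∈ J) := by
        intro i
        induction i with
        | zero =>
          intro _
          rw [hW0b, hW0r]
          exact ⟨hcb, hcr, hbal, by rw [sub_self]; exact zero_mem J⟩
        | succ i ih =>
          intro hi
          obtain ⟨hcWb, hcWr, hbalW, hdiff⟩ := ih (by omega)
          have hstep := hsteps (i+1) (by omega) hi
          simp only [Nat.add_sub_cancel] at hstep
          obtain ⟨⟨hblue, hG1rS, hcS⟩, ⟨hred, hU2bT, hcT⟩, hWbi, hWri⟩ := hstep
          obtain ⟨hFbal, hSne, hsuppS, hbalG1, hbalG2, hneG1, hneG2, hSint, hFbB, hFrB⟩ := hblue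
          obtain ⟨hFbal', hTne, hsuppT, hbalU1, hbalU2, hneU1, hneU2, hTint, hFbR, hFrR⟩ := hred
          rw [hG1rS] at hSint hbalG1 hFrB
          rw [hU2bT] at hTint hbalU2 hFbR
          have hSle : S (i+1) ≤ G2b (i+1) := le_of_eq_inter hSint
          have hTle : T (i+1) ≤ U1r (i+1) := le_of_eq_inter' hTint
          have hG2r : G2r (i+1) = Wr i := by
            rw [add_comm] at hFrB
            exact (add_left_cancel hFrB).symm
          have hU1b : U1b (i+1) = Wb i := by
            have h' : Wb i + T (i+1) = T (i+1) + U1b (i+1) := by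
              rw [hFbR]; exact add_comm _ _
            rw [add_comm] at h'
            exact (add_left_cancel h').symm
          have hJ1 : binom K V E (G1b (i+1)) (S (i+1)) ∈ J := by
            have hcG1 : Multiset.card (G1b (i+1)) = Multiset.card (S (i+1)) :=
              hbalG1.card_eq hE hunif
            exact IH (Multiset.card (G1b (i+1))) (by rw [hcG1]; exact hcS) _ _ hbalG1 rfl
          have hJ2 : binom K V E (T (i+1)) (U2r (i+1)) ∈ J := by
            exact IH _ hcT _ _ hbalU2 rfl
          have hX1 : binom K V E (Wb i) (Wr i) - binom K V E (G2b (i+1)) (Wr i) ∈ J := by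
            rw [blue_identity hSle hFbB]
            exact Ideal.mul_mem_left _ _ hJ1
          have hX2 : binom K V E (Wb i) (Wr i) - binom K V E (Wb i) (U1r (i+1)) ∈ J := by
            rw [red_identity hTle hFrR]
            exact Ideal.mul_mem_left _ _ hJ2
          have hcWb' : Multiset.card (Wb (i+1)) = n := by
            rw [hWbi, hbalG2.card_eq hE hunif, hG2r, hcWr]
          have hcWr' : Multiset.card (Wr (i+1)) = n := by
            rw [hWri, ← (hbalU1.card_eq hE hunif), hU1b, hcWb]
          have hbalW' : Balanced V E (Wb (i+1)) (Wr (i+1)) := by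
            rw [hWbi, hWri]
            have b1 : Balanced V E (G2b (i+1)) (Wr i) := hG2r ▸ hbalG2
            have b2 : Balanced V E (Wr i) (Wb i) := hbalW.symm
            have b3 : Balanced V E (Wb i) (U1r (i+1)) := hU1b ▸ hbalU1
            exact (b1.trans b2).trans b3
          refine ⟨hcWb', hcWr', hbalW', ?_⟩
          have heq : binom K V E B R - binom K V E (Wb (i+1)) (Wr (i+1)) =
              (binom K V E B R - binom K V E (Wb i) (Wr i)) +
              (binom K V E (Wb i) (Wr i) - binom K V E (G2b (i+1)) (Wr i)) +
              (binom K V E (Wb i) (Wr i) - binom K V E (Wb i) (U1r (i+1))) := by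
            rw [hWbi, hWri]
            simp only [binom_eq]
            ring
          rw [heq]
          exact add_mem (add_mem hdiff hX1) hX2
      obtain ⟨hcWbN, hcWrN, hbalN, hdiffN⟩ := key N (le_refl N)
      have hWNJ : binom K V E (Wb N) (Wr N) ∈ J := by
        rcases hfin with hov | hprop
        · -- overlapping splitting sets
          obtain ⟨e, he⟩ := Multiset.exists_mem_of_ne_zero hov
          have heS : e ∈ S N := Multiset.mem_inter.1 he |>.1
          have heT : e ∈ T N := Multiset.mem_inter.1 he |>.2
          have hstep := hsteps N hN1 (le_refl N)
          obtain ⟨⟨hblue, hG1rS, hcS⟩, ⟨hred, hU2bT, hcT⟩, hWbi, hWri⟩ := hstep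
          obtain ⟨_, _, _, _, _, _, _, hSint, _, _⟩ := hblue
          obtain ⟨_, _, _, _, _, _, _, hTint, _, _⟩ := hred
          rw [hG1rS] at hSint
          rw [hU2bT] at hTint
          have he1 : e ∈ Wb N := by
            rw [hWbi]
            exact Multiset.mem_of_le (le_of_eq_inter hSint) heS
          have he2 : e ∈ Wr N := by
            rw [hWri]
            exact Multiset.mem_of_le (le_of_eq_inter' hTint) heT
          have hle1 : ({e} : Multiset (Edge V E)) ≤ Wb N := Multiset.singleton_le.2 he1
          have hle2 : ({e} : Multiset (Edge V E)) ≤ Wr N := Multiset.singleton_le.2 he2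
          rw [single_identity hle1 hle2]
          refine Ideal.mul_mem_left _ _ (IH (n-1) (by omega) _ _
            (hbalN.sub Balanced.rfl hle1 hle2) ?_)
          rw [Multiset.card_sub hle1, hcWbN, Multiset.card_singleton]
        · obtain ⟨P, hP⟩ := hprop
          exact proper_case hE hunif IH hcWbN hP
      have : binom K V E B R =
          (binom K V E B R - binom K V E (Wb N) (Wr N)) + binom K V E (Wb N) (Wr N) := by
        ring
      rw [this]
      exact add_mem hdiffN hWNJ
  · -- non-primitive: decompose
    have hnq : ¬¬∃ B' R' : Multiset (Edge V E),
        ¬(B' = 0 ∧ R' = 0) ∧ Balanced V E B' R' ∧ B' < B ∧ R' < R := by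
      intro hq
      exact hprim ⟨hbal, hq⟩
    rw [not_not] at hnq
    obtain ⟨B', R', hne0, hbal', hltB, hltR⟩ := hnq
    have hB0 : B' ≠ 0 := by
      intro h0
      subst h0
      exact hne0 ⟨rfl, balanced_eq_zero hE hbal'⟩
    have hleB := le_of_lt hltB
    have hleR := le_of_lt hltR
    have hFb : B + 0 = B' + (B - B') := by
      rw [add_zero, add_tsub_cancel_of_le hleB]
    have hFr : R + 0 = R' + (R - R') := by
      rw [add_zero, add_tsub_cancel_of_le hleR]
    have hid := split_identity (K := K) (Multiset.zero_le R') (Multiset.zero_le (B - B')) hFb hFr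
    rw [tsub_zero, tsub_zero] at hid
    have hc1 : Multiset.card B' < n := by
      rw [← hcb]; exact Multiset.card_lt_card hltB
    have hc2 : Multiset.card (B - B') < n := by
      rw [Multiset.card_sub hleB, hcb]
      have := Multiset.card_pos.2 hB0
      omega
    rw [hid]
    exact add_mem
      (Ideal.mul_mem_left _ _ (IH _ hc1 B' R' hbal' rfl))
      (Ideal.mul_mem_left _ _ (IH _ hc2 _ _ (hbal.sub hbal' hleB hleR) rfl))

end Descent

-- ===== the toric ideal is spanned by balanced binomials =====

lemma binom_toMultiset (u w : Edge V E →₀ ℕ) :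
    binom K V E (Finsupp.toMultiset u) (Finsupp.toMultiset w) =
      monomial u (1 : K) - monomial w 1 := by
  rw [binom_eq, prodX_eq_monomial, prodX_eq_monomial, toFinsupp_toMultiset, toFinsupp_toMultiset]

lemma toricIdeal_le_span {d : ℕ}
    (hbinoms : ∀ B R : Multiset (Edge V E), Balanced V E B R →
      binom K V E B R ∈ Ideal.span {f | f ∈ toricIdeal K V E ∧ f.totalDegree ≤ d}) :
    toricIdeal K V E ≤ Ideal.span {f | f ∈ toricIdeal K V E ∧ f.totalDegree ≤ d} := by
  classical
  intro f hf
  generalize hs : f.support.card = m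
  induction m using Nat.strong_induction_on generalizing f with
  | _ m IHm =>
  by_cases hf0 : f = 0
  · rw [hf0]; exact zero_mem _
  obtain ⟨u, hu⟩ := (support_nonempty.2 hf0)
  have hker := ker_coeff hf (pimF u)
  have hex : ∃ w ∈ f.support, w ≠ u ∧ pimF w = pimF u := by
    by_contra hcon
    push_neg at hcon
    have hs1 : ∑ w ∈ f.support, (if pimF w = pimF u then coeff w f else 0) = coeff u f := by
      rw [Finset.sum_eq_single u]
      · simp
      · intro w hw hwne
        have := hcon w hw hwne
        simp [this]
      · intro habs
        exact absurd hu habs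
    rw [hs1] at hker
    exact (mem_support_iff.1 hu) hker
  obtain ⟨w, hwmem, hwne, hwpim⟩ := hex
  have hbalg : Balanced V E (Finsupp.toMultiset u) (Finsupp.toMultiset w) := by
    rw [balanced_iff_pim]
    exact (hwpim).symm
  have hgJ := hbinoms _ _ hbalg
  have hgI : binom K V E (Finsupp.toMultiset u) (Finsupp.toMultiset w) ∈ toricIdeal K V E :=
    binom_mem_ker hbalg
  rw [binom_toMultiset] at hgJ hgI
  set c := coeff u f with hc
  set g : MvPolynomial (Edge V E) K := monomial u (1 : K) - monomial w 1 with hg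
  set f' : MvPolynomial (Edge V E) K := f - C c * g with hf'
  have hf'I : f' ∈ toricIdeal K V E := sub_mem hf (Ideal.mul_mem_left _ _ hgI)
  have hcoef : ∀ x, coeff x f' = coeff x f - c * ((if u = x then 1 else 0) - (if w = x then 1 else 0)) := by
    intro x
    rw [hf', coeff_sub, coeff_C_mul, hg, coeff_sub, coeff_monomial, coeff_monomial]
  have hsupp' : f'.support ⊆ f.support.erase u := by
    intro x hx
    rw [Finset.mem_erase]
    have hxu : x ≠ u := by
      intro h
      subst h
      have : coeff x f' = 0 := by
        rw [hcoef x, if_pos rfl, if_neg hwne]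
        ring
      exact (mem_support_iff.1 hx) this
    refine ⟨hxu, ?_⟩
    by_cases hxw : x = w
    · subst hxw; exact hwmem
    · have : coeff x f' = coeff x f := by
        rw [hcoef x, if_neg (fun h => hxu h.symm), if_neg (fun h => hxw h.symm)]
        ring
      exact mem_support_iff.2 (this ▸ mem_support_iff.1 hx)
  have hcard : f'.support.card < m := by
    have h1 := Finset.card_le_card hsupp'
    rw [Finset.card_erase_of_mem hu, hs] at h1
    have h2 : 0 < m := by rw [← hs]; exact Finset.card_pos.2 ⟨u, hu⟩
    omega
  have hf'J := IHm _ hcard hf'I rfl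
  have : f = f' + C c * g := by rw [hf']; ring
  rw [this]
  exact add_mem hf'J (Ideal.mul_mem_left _ _ hgJ)

-- ===== connectivity: the invariant =====

section Connect

variable {k d : ℕ}

/-- one move: replace a balanced sub-multiset of size at most `d` -/
def stp (d : ℕ) (X Y : Multiset (Edge V E)) : Prop :=
  ∃ C A A' : Multiset (Edge V E), Balanced V E A A' ∧ A ≠ 0 ∧
    Multiset.card A ≤ d ∧ Multiset.card A' ≤ d ∧ X = C + A ∧ Y = C + A'

lemma stp_symm (hE : ∀ e ∈ E, e.Nonempty) : Symmetric (stp (E := E) d) := by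
  rintro X Y ⟨C, A, A', h1, h2, h3, h4, h5, h6⟩
  have hA' : A' ≠ 0 := by
    intro h0
    subst h0
    exact h2 (balanced_eq_zero_left hE h1)
  exact ⟨C, A', A, h1.symm, hA', h4, h3, h6, h5⟩

/-- the corresponding relation on exponents, allowing also trivial moves -/
def rel (d : ℕ) (u v : Edge V E →₀ ℕ) : Prop :=
  ∃ w a b : Edge V E →₀ ℕ, pimF a = pimF b ∧
    (a.sum fun _ c => c) ≤ d ∧ (b.sum fun _ c => c) ≤ d ∧ u = w + a ∧ v = w + b

lemma rel_symm : Symmetric (rel (E := E) d) := by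
  rintro u v ⟨w, a, b, h1, h2, h3, h4, h5⟩
  exact ⟨w, b, a, h1.symm, h3, h2, h5, h4⟩

lemma rel_refl (u : Edge V E →₀ ℕ) : rel d u u :=
  ⟨u, 0, 0, rfl, by simp, by simp, by simp, by simp⟩

open scoped Classical in
/-- sum of coefficients over the `rel`-equivalence class of `u0` -/
noncomputable def Sfun (d : ℕ) (u0 : Edge V E →₀ ℕ) (f : MvPolynomial (Edge V E) K) : K :=
  ∑ w ∈ f.support, if Relation.EqvGen (rel (E := E) d) w u0 then coeff w f else 0

open scoped Classical in
lemma Sfun_eq_superset (u0 : Edge V E →₀ ℕ) (f : MvPolynomial (Edge V E) K)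
    {A : Finset (Edge V E →₀ ℕ)} (hA : f.support ⊆ A) :
    Sfun d u0 f = ∑ w ∈ A, if Relation.EqvGen (rel (E := E) d) w u0 then coeff w f else 0 := by
  rw [Sfun]
  refine Finset.sum_subset hA ?_
  intro x _ hx
  rw [notMem_support_iff.1 hx]
  simp

open scoped Classical in
lemma Sfun_zero (u0 : Edge V E →₀ ℕ) : Sfun d u0 (0 : MvPolynomial (Edge V E) K) = 0 := by
  simp [Sfun]

open scoped Classical in
lemma Sfun_add (u0 : Edge V E →₀ ℕ) (f g : MvPolynomial (Edge V E) K) :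
    Sfun d u0 (f + g) = Sfun d u0 f + Sfun d u0 g := by
  have h1 : (f + g).support ⊆ f.support ∪ g.support := support_add
  have h2 : f.support ⊆ f.support ∪ g.support := Finset.subset_union_left
  have h3 : g.support ⊆ f.support ∪ g.support := Finset.subset_union_right
  rw [Sfun_eq_superset u0 (f+g) h1, Sfun_eq_superset u0 f h2, Sfun_eq_superset u0 g h3,
    ← Finset.sum_add_distrib]
  refine Finset.sum_congr (Eq.refl _) fun w _ => ?_
  rw [coeff_add]
  split <;> simp

open scoped Classical in
lemma Sfun_monomial (u0 a : Edge V E →₀ ℕ) (c : K) :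
    Sfun d u0 (monomial a c) = if Relation.EqvGen (rel (E := E) d) a u0 then c else 0 := by
  rw [Sfun]
  by_cases hc : c = 0
  · subst hc; simp
  · rw [support_monomial, if_neg hc, Finset.sum_singleton, coeff_monomial, if_pos rfl]

open scoped Classical in
lemma Sfun_C_mul (u0 : Edge V E →₀ ℕ) (c : K) (f : MvPolynomial (Edge V E) K) :
    Sfun d u0 (C c * f) = c * Sfun d u0 f := by
  have hsub : (C c * f).support ⊆ f.support := by
    intro x hx
    rw [mem_support_iff] at hx ⊢
    intro h0
    rw [coeff_C_mul, h0, mul_zero] at hx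
    exact hx rfl
  rw [Sfun_eq_superset u0 _ hsub, Sfun, Finset.mul_sum]
  refine Finset.sum_congr (Eq.refl _) fun w _ => ?_
  rw [coeff_C_mul]
  split <;> simp

open scoped Classical in
lemma Sfun_finset_sum (u0 : Edge V E →₀ ℕ) {ι : Type} (A : Finset ι)
    (F : ι → MvPolynomial (Edge V E) K) :
    Sfun d u0 (∑ x ∈ A, F x) = ∑ x ∈ A, Sfun d u0 (F x) := by
  induction A using Finset.induction with
  | empty => simp [Sfun_zero]
  | @insert a A ha ih =>
    rw [Finset.sum_insert ha, Finset.sum_insert ha, Sfun_add, ih]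

end Connect

-- ===== connectivity from ideal membership =====

set_option maxHeartbeats 1000000 in
open scoped Classical in
lemma Sfun_mul_vanish {d : ℕ} (u0 : Edge V E →₀ ℕ) {g : MvPolynomial (Edge V E) K}
    (hg : g ∈ toricIdeal K V E) (hgd : g.totalDegree ≤ d) (m : Edge V E →₀ ℕ) :
    Sfun d u0 (monomial m 1 * g) = 0 := by
  have hrepr : monomial m (1:K) * g = ∑ w ∈ g.support, monomial (m + w) (coeff w g) := by
    conv_lhs => rw [as_sum g]
    rw [Finset.mul_sum]
    exact Finset.sum_congr (Eq.refl _) fun w _ => by rw [monomial_mul, one_mul]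
  rw [hrepr, Sfun_finset_sum]
  have hrw : ∀ w ∈ g.support, Sfun d u0 (monomial (m+w) (coeff w g)) =
      (if Relation.EqvGen (rel (E:=E) d) (m+w) u0 then coeff w g else 0) :=
    fun w _ => Sfun_monomial u0 (m+w) (coeff w g)
  rw [Finset.sum_congr (Eq.refl _) hrw]
  rw [← Finset.sum_fiberwise_of_maps_to (t := g.support.image pimF)
    (fun w hw => Finset.mem_image_of_mem pimF hw)
    (fun w => if Relation.EqvGen (rel (E:=E) d) (m+w) u0 then coeff w g else 0)]
  refine Finset.sum_eq_zero fun y _ => ?_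
  by_cases hex : ∃ w0 ∈ g.support.filter (fun w => pimF w = y),
      Relation.EqvGen (rel (E:=E) d) (m + w0) u0
  · obtain ⟨w0, hw0, hrel0⟩ := hex
    have hw0' := Finset.mem_filter.1 hw0
    have hall : ∀ w ∈ g.support.filter (fun w => pimF w = y),
        Relation.EqvGen (rel (E:=E) d) (m + w) u0 := by
      intro w hw
      have hw' := Finset.mem_filter.1 hw
      refine Relation.EqvGen.trans _ _ _ (Relation.EqvGen.rel _ _ ?_) hrel0
      exact ⟨m, w, w0, by rw [hw'.2, hw0'.2], le_trans (le_totalDegree hw'.1) hgd,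
        le_trans (le_totalDegree hw0'.1) hgd, rfl, rfl⟩
    calc ∑ w ∈ g.support.filter (fun w => pimF w = y),
          (if Relation.EqvGen (rel (E:=E) d) (m+w) u0 then coeff w g else 0)
        = ∑ w ∈ g.support.filter (fun w => pimF w = y), coeff w g :=
          Finset.sum_congr (Eq.refl _) fun w hw => if_pos (hall w hw)
      _ = 0 := by
          rw [Finset.filter_congr_decidable, Finset.sum_filter]
          exact ker_coeff hg y
  · push_neg at hex
    exact Finset.sum_eq_zero fun w hw => if_neg (hex w hw)

open scoped Classical in
lemma span_vanish {d : ℕ} (u0 : Edge V E →₀ ℕ) {f : MvPolynomial (Edge V E) K}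
    (hf : f ∈ Ideal.span {h | h ∈ toricIdeal K V E ∧ h.totalDegree ≤ d}) :
    ∀ p : MvPolynomial (Edge V E) K, Sfun d u0 (p * f) = 0 := by
  refine Submodule.span_induction ?_ ?_ ?_ ?_ hf
  · rintro g ⟨hgI, hgd⟩ p
    have hexp : p * g = ∑ mm ∈ p.support, C (coeff mm p) * (monomial mm 1 * g) := by
      conv_lhs => rw [as_sum p]
      rw [Finset.sum_mul]
      refine Finset.sum_congr (Eq.refl _) fun mm _ => ?_
      rw [← mul_assoc, C_mul_monomial, mul_one]
    rw [hexp, Sfun_finset_sum]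
    refine Finset.sum_eq_zero fun mm _ => ?_
    rw [Sfun_C_mul, Sfun_mul_vanish u0 hgI hgd mm, mul_zero]
  · intro p; rw [mul_zero, Sfun_zero]
  · intro x y _ _ ihx ihy p; rw [mul_add, Sfun_add, ihx p, ihy p, add_zero]
  · intro a x _ ih p; rw [smul_eq_mul, ← mul_assoc]; exact ih (p * a)

open scoped Classical in
lemma Sfun_sub (u0 : Edge V E →₀ ℕ) (f g : MvPolynomial (Edge V E) K) {d : ℕ} :
    Sfun d u0 (f - g) = Sfun d u0 f - Sfun d u0 g := by
  have h1 := Sfun_add (d := d) u0 (f - g) g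
  rw [sub_add_cancel] at h1
  rw [h1]
  ring

lemma connect {d : ℕ} {B R : Multiset (Edge V E)}
    (hmem : binom K V E B R ∈ Ideal.span {h | h ∈ toricIdeal K V E ∧ h.totalDegree ≤ d}) :
    Relation.EqvGen (rel (E := E) d) (Multiset.toFinsupp B) (Multiset.toFinsupp R) := by
  classical
  rcases eq_or_ne B R with h | hne
  · rw [h]; exact Relation.EqvGen.refl _
  have h0 := span_vanish (Multiset.toFinsupp B) hmem 1
  rw [one_mul, binom_eq, prodX_eq_monomial, prodX_eq_monomial, Sfun_sub, Sfun_monomial,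
    Sfun_monomial, if_pos (Relation.EqvGen.refl _)] at h0
  by_cases hc : Relation.EqvGen (rel (E := E) d) (Multiset.toFinsupp R) (Multiset.toFinsupp B)
  · exact (Relation.EqvGen.symm _ _ hc)
  · rw [if_neg hc, sub_zero] at h0
    exact absurd h0 one_ne_zero

lemma eqv_to_rtg {α : Type*} {r : α → α → Prop} (hsym : Symmetric r) {a b : α}
    (h : Relation.EqvGen r a b) : Relation.ReflTransGen r a b := by
  induction h with
  | rel x y hxy => exact Relation.ReflTransGen.single hxy
  | refl x => exact Relation.ReflTransGen.refl
  | symm x y _ ih => haveI : Std.Symm r := ⟨hsym⟩; exact Std.Symm.symm _ _ ih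
  | trans x y z _ _ ih1 ih2 => exact ih1.trans ih2

lemma card_toMultiset' (a : Edge V E →₀ ℕ) :
    Multiset.card (Finsupp.toMultiset a) = a.sum fun _ c => c :=
  Finsupp.card_toMultiset a

lemma rtg_transfer {d : ℕ} (hE : ∀ e ∈ E, e.Nonempty) {u v : Edge V E →₀ ℕ}
    (h : Relation.ReflTransGen (rel (E:=E) d) u v) :
    Relation.ReflTransGen (stp (E:=E) d) (Finsupp.toMultiset u) (Finsupp.toMultiset v) := by
  induction h with
  | refl => exact Relation.ReflTransGen.refl
  | @tail x y hx hstep ih =>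
    obtain ⟨w, a, b, hpim, hsa, hsb, hxw, hyw⟩ := hstep
    have hbal : Balanced V E (Finsupp.toMultiset a) (Finsupp.toMultiset b) := by
      rw [balanced_iff_pim]
      exact hpim
    have hxm : Finsupp.toMultiset x = Finsupp.toMultiset w + Finsupp.toMultiset a := by
      rw [hxw, Finsupp.toMultiset_add]
    have hym : Finsupp.toMultiset y = Finsupp.toMultiset w + Finsupp.toMultiset b := by
      rw [hyw, Finsupp.toMultiset_add]
    by_cases ha0 : Finsupp.toMultiset a = 0
    · have hb0 : Finsupp.toMultiset b = 0 := by
        rw [ha0] at hbal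
        exact balanced_eq_zero hE hbal
      have : Finsupp.toMultiset y = Finsupp.toMultiset x := by
        rw [hxm, hym, ha0, hb0]
      rw [this]
      exact ih
    · refine Relation.ReflTransGen.tail ih ?_
      refine ⟨Finsupp.toMultiset w, Finsupp.toMultiset a, Finsupp.toMultiset b, hbal, ha0,
        ?_, ?_, hxm, hym⟩
      · rw [card_toMultiset']; exact hsa
      · rw [card_toMultiset']; exact hsb

lemma chain_getD {α : Type*} (dflt : α) (r : α → α → Prop) :
    ∀ (a : α) (l : List α), List.Chain r a l → ∀ i, i < l.length →
      r ((a :: l).getD i dflt) ((a :: l).getD (i+1) dflt) := by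
  intro a l
  induction l generalizing a with
  | nil => intro _ i hi; simp at hi
  | cons b t ih =>
    intro hchain i hi
    simp only [List.Chain, List.isChain_cons_cons] at hchain
    cases i with
    | zero => simpa using hchain.1
    | succ j =>
      have := ih b hchain.2 j (by simpa using hi)
      simpa using this

-- ===== small helpers for the walk construction =====

lemma inter_eq_self_of_le {a b : Multiset (Edge V E)} (h : a ≤ b) : a ∩ b = a :=
  le_antisymm Multiset.inter_le_left (Multiset.le_inter (le_refl a) h)

lemma inter_eq_self_of_le' {a b : Multiset (Edge V E)} (h : a ≤ b) : b ∩ a = a :=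
  le_antisymm Multiset.inter_le_right (Multiset.le_inter h (le_refl a))

lemma sep_toFinset (S W W' : Multiset (Edge V E)) :
    S.toFinset ⊆ ((W + S) + (W' + S)).toFinset := by
  intro x hx
  rw [Multiset.mem_toFinset] at hx ⊢
  exact Multiset.mem_add.2 (Or.inl (Multiset.mem_add.2 (Or.inr hx)))

lemma prim_absurd {B R : Multiset (Edge V E)} {n : ℕ} (hprim : Primitive V E B R)
    (hcb : Multiset.card B = n) (hcr : Multiset.card R = n) (hn : 2 ≤ n)
    {e : Edge V E} (heB : e ∈ B) (heR : e ∈ R) : False := by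
  refine hprim.2 ⟨{e}, {e}, by simp, Balanced.rfl, ?_, ?_⟩
  · refine lt_of_le_of_ne (Multiset.singleton_le.2 heB) ?_
    intro h
    have := congrArg Multiset.card h
    rw [Multiset.card_singleton, hcb] at this
    omega
  · refine lt_of_le_of_ne (Multiset.singleton_le.2 heR) ?_
    intro h
    have := congrArg Multiset.card h
    rw [Multiset.card_singleton, hcr] at this
    omega

-- ===== from a walk to the splitting-sequence witness =====

lemma walk_to_witness {k d : ℕ} (hE : ∀ e ∈ E, e.Nonempty) (hunif : ∀ e ∈ E, e.card = k)
    (hd : 2 ≤ d) {B R : Multiset (Edge V E)} {n : ℕ}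
    (hprim : Primitive V E B R) (hcb : Multiset.card B = n) (hcr : Multiset.card R = n)
    (hn : d < n)
    (hwalk : Relation.ReflTransGen (stp (E := E) d) B R) :
    (∃ N : ℕ, 1 ≤ N ∧
      ∃ Wb Wr S T G1b G1r G2b G2r U1b U1r U2b U2r : ℕ → Multiset (Edge V E),
        Wb 0 = B ∧ Wr 0 = R ∧
        (∀ i : ℕ, 1 ≤ i → i ≤ N →
          (SplittingSetWith V E (Wb (i - 1)) (Wr (i - 1)) (S i)
              (G1b i) (G1r i) (G2b i) (G2r i) ∧
            G1r i = S i ∧ Multiset.card (S i) < n) ∧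
          (SplittingSetWith V E (Wb (i - 1)) (Wr (i - 1)) (T i)
              (U1b i) (U1r i) (U2b i) (U2r i) ∧
            U2b i = T i ∧ Multiset.card (T i) < n) ∧
          Wb i = G2b i ∧ Wr i = U1r i) ∧
        (S N ∩ T N ≠ 0 ∨
          ∃ P : Multiset (Edge V E), ProperSplittingSet V E (Wb N) (Wr N) P)) := by
  classical
  obtain ⟨l, hchain, hlast⟩ := List.exists_isChain_cons_of_relationReflTransGen hwalk
  set L : List (Multiset (Edge V E)) := B :: l with hL
  set ℓ := l.length with hℓ
  set M : ℕ → Multiset (Edge V E) := fun i => L.getD i R with hMdef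
  have hM0 : M 0 = B := rfl
  have hMlast : M ℓ = R := by
    have hlen : ℓ < L.length := by simp [hL, hℓ]
    show L.getD ℓ R = R
    rw [List.getD_eq_getElem L R hlen]
    rw [List.getLast_eq_getElem] at hlast
    simpa [hL] using hlast
  have hMge : ∀ i, ℓ ≤ i → M i = R := by
    intro i hi
    rcases eq_or_lt_of_le hi with h | h
    · rw [← h]; exact hMlast
    · show L.getD i R = R
      apply List.getD_eq_default
      simp only [hL, List.length_cons]
      omega
  have hstep0 : ∀ i, i < ℓ → stp (E := E) d (M i) (M (i+1)) :=
    fun i hi => chain_getD R (stp (E := E) d) B l hchain i hi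
  have hbalstep : ∀ i, i < ℓ → Balanced V E (M i) (M (i+1)) := by
    intro i hi
    obtain ⟨C, A, A', h1, _, _, _, h5, h6⟩ := hstep0 i hi
    rw [h5, h6]
    exact Balanced.rfl.add h1
  have hbalB : ∀ i, Balanced V E B (M i) := by
    intro i
    induction i with
    | zero => rw [hM0]; exact Balanced.rfl
    | succ j ih =>
      by_cases h : j < ℓ
      · exact ih.trans (hbalstep j h)
      · rw [hMge (j+1) (by omega)]; exact hprim.1
  have hcardM : ∀ i, Multiset.card (M i) = n := by
    intro i; rw [← (hbalB i).card_eq hE hunif, hcb]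
  have hbalMM : ∀ i j, Balanced V E (M i) (M j) :=
    fun i j => (hbalB i).symm.trans (hbalB j)
  have hRne : R ≠ 0 := by
    intro h0; rw [h0] at hcr; simp at hcr; omega
  have hℓ2 : 2 ≤ ℓ := by
    by_contra hsm
    push_neg at hsm
    have hcase : ℓ = 0 ∨ ℓ = 1 := by omega
    rcases hcase with h0 | h1
    · have hBR : B = R := by rw [← hM0, ← h0, hMlast]
      obtain ⟨e, he⟩ := Multiset.exists_mem_of_ne_zero (show B ≠ 0 by
        intro h; rw [h] at hcb; simp at hcb; omega)
      exact prim_absurd hprim hcb hcr (by omega) he (hBR ▸ he)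
    · obtain ⟨C, A, A', hb1, hb2, hb3, hb4, hb5, hb6⟩ := hstep0 0 (by omega)
      rw [hM0] at hb5
      have h6' : R = C + A' := by
        rw [← hMlast, h1]; exact hb6
      have hC0 : C ≠ 0 := by
        intro h0
        rw [h0, zero_add] at hb5
        have := congrArg Multiset.card hb5
        omega
      obtain ⟨e, he⟩ := Multiset.exists_mem_of_ne_zero hC0
      have heB : e ∈ B := by rw [hb5]; exact Multiset.mem_add.2 (Or.inl he)
      have heR : e ∈ R := by rw [h6']; exact Multiset.mem_add.2 (Or.inl he)
      exact prim_absurd hprim hcb hcr (by omega) heB heR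
  set m := (ℓ + 1) / 2 with hm
  have hm1 : 1 ≤ m := by omega
  have hup : ℓ ≤ 2 * m + 1 := by omega
  have hstepAll : ∀ i, i ≤ 2 * m → stp (E := E) d (M i) (M (i+1)) := by
    intro i hi
    by_cases h : i < ℓ
    · exact hstep0 i h
    · have hMi : M i = R := hMge i (by omega)
      have hMi1 : M (i+1) = R := hMge (i+1) (by omega)
      rw [hMi, hMi1]
      obtain ⟨e, he⟩ := Multiset.exists_mem_of_ne_zero hRne
      refine ⟨R - {e}, {e}, {e}, Balanced.rfl, by simp, ?_, ?_,
        (tsub_add_cancel_of_le (Multiset.singleton_le.2 he)).symm,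
        (tsub_add_cancel_of_le (Multiset.singleton_le.2 he)).symm⟩
      · rw [Multiset.card_singleton]; omega
      · rw [Multiset.card_singleton]; omega
  have hdata : ∀ i : ℕ, ∃ Dt : Multiset (Edge V E) × Multiset (Edge V E) × Multiset (Edge V E),
      i ≤ 2*m → (Balanced V E Dt.2.1 Dt.2.2 ∧ Dt.2.1 ≠ 0 ∧ Multiset.card Dt.2.1 ≤ d ∧
        Multiset.card Dt.2.2 ≤ d ∧ M i = Dt.1 + Dt.2.1 ∧ M (i+1) = Dt.1 + Dt.2.2) := by
    intro i
    by_cases h : i ≤ 2*m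
    · obtain ⟨C, A, A', h1, h2, h3, h4, h5, h6⟩ := hstepAll i h
      exact ⟨(C, A, A'), fun _ => ⟨h1, h2, h3, h4, h5, h6⟩⟩
    · exact ⟨(0, 0, 0), fun h' => absurd h' h⟩
  choose Dt hDt using hdata
  set Cd : ℕ → Multiset (Edge V E) := fun i => (Dt i).1 with hCd
  set Ad : ℕ → Multiset (Edge V E) := fun i => (Dt i).2.1 with hAd
  set Ad' : ℕ → Multiset (Edge V E) := fun i => (Dt i).2.2 with hAd'
  have hDs : ∀ i, i ≤ 2*m → (Balanced V E (Ad i) (Ad' i) ∧ Ad i ≠ 0 ∧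
      Multiset.card (Ad i) ≤ d ∧ Multiset.card (Ad' i) ≤ d ∧
      M i = Cd i + Ad i ∧ M (i+1) = Cd i + Ad' i) := fun i h => hDt i h
  have hA'ne : ∀ i, i ≤ 2*m → Ad' i ≠ 0 := by
    intro i hi h0
    obtain ⟨hb, hne, _, _, _, _⟩ := hDs i hi
    rw [h0] at hb
    exact hne (balanced_eq_zero_left hE hb)
  have hA'le : ∀ i, i ≤ 2*m → Ad' i ≤ M (i+1) := fun i hi => by
    rw [(hDs i hi).2.2.2.2.2]; exact Multiset.le_add_left _ _
  have hAle : ∀ i, i ≤ 2*m → Ad i ≤ M i := fun i hi => by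
    rw [(hDs i hi).2.2.2.2.1]; exact Multiset.le_add_left _ _
  refine ⟨m + 1, by omega,
    (fun i => if i ≤ m then M i else M (m+1)),               -- Wb
    (fun i => if i ≤ m then M (2*m+1 - i) else M (m+1)),     -- Wr
    (fun i => Ad' (i-1)),                                    -- S
    (fun i => if i ≤ m then Ad (2*m+1 - i) else Ad' m),      -- T
    (fun i => Ad (i-1)),                                     -- G1b
    (fun i => Ad' (i-1)),                                    -- G1r
    (fun i => M i),                                          -- G2b
    (fun i => M (2*m+2 - i)),                                -- G2r
    (fun i => M (i-1)),                                      -- U1b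
    (fun i => if i ≤ m then M (2*m+1 - i) else M (m+1)),     -- U1r
    (fun i => if i ≤ m then Ad (2*m+1 - i) else Ad' m),      -- U2b
    (fun i => if i ≤ m then Ad' (2*m+1 - i) else Ad' m),     -- U2r
    ?_, ?_, ?_, ?_⟩
  · -- Wb 0 = B
    show (if (0:ℕ) ≤ m then M 0 else M (m+1)) = B
    rw [if_pos (Nat.zero_le m)]
    exact hM0
  · -- Wr 0 = R
    show (if (0:ℕ) ≤ m then M (2*m+1 - 0) else M (m+1)) = R
    rw [if_pos (Nat.zero_le m)]
    exact hMge (2*m+1 - 0) (by omega)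
  · -- the step conditions
    intro i h1i hiN
    obtain ⟨j, rfl⟩ : ∃ j, i = j + 1 := ⟨i - 1, by omega⟩
    have hjm : j ≤ m := by omega
    have hj2m : j ≤ 2*m := by omega
    obtain ⟨hbal_j, hne_j, hcA_j, hcA'_j, heq_j, heq_j'⟩ := hDs j hj2m
    have hSne_j : Ad' j ≠ 0 := hA'ne j hj2m
    simp only [Nat.add_sub_cancel]
    rw [(show 2*m+2 - (j+1) = 2*m+1 - j by omega)]
    rw [if_pos hjm, if_pos hjm]
    refine ⟨⟨?_, ?_, ?_⟩, ?_, ?_, ?_⟩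
    · -- blue splitting
      refine ⟨(hbalMM j (2*m+1-j)).add Balanced.rfl, hSne_j, sep_toFinset _ _ _,
        hbal_j, hbalMM (j+1) (2*m+1-j), ?_, ?_, ?_, ?_, ?_⟩
      · rintro ⟨hq, -⟩
        have := congrArg Multiset.card hq
        rw [Multiset.card_add, hcardM j] at this
        omega
      · rintro ⟨hq, -⟩
        have := congrArg Multiset.card hq
        rw [Multiset.card_add, hcardM (j+1), hcardM j] at this
        have := Multiset.card_pos.2 hSne_j
        omega
      · exact (inter_eq_self_of_le (hA'le j hj2m)).symm
      · rw [heq_j, heq_j', add_comm (Cd j) (Ad j), add_assoc]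
      · exact add_comm _ _
    · -- G1r i = S i  (may be `True` after simp)
      trivial
    · -- size of S
      omega
    · -- red splitting
      by_cases hc : j + 1 ≤ m
      · -- generic red step
        rw [if_pos hc, if_pos hc, if_pos hc]
        have hq2m : 2*m+1 - (j+1) ≤ 2*m := by omega
        have hq1 : (2*m+1 - (j+1)) + 1 = 2*m + 1 - j := by omega
        obtain ⟨hbal_q, hne_q, hcA_q, hcA'_q, heq_q, heq_q'⟩ := hDs (2*m+1 - (j+1)) hq2m
        refine ⟨⟨(hbalMM j (2*m+1-j)).add Balanced.rfl, hne_q, sep_toFinset _ _ _,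
          hbalMM j (2*m+1 - (j+1)), hbal_q, ?_, ?_, ?_, rfl, ?_⟩, trivial, by omega⟩
        · rintro ⟨hxq, -⟩
          have := congrArg Multiset.card hxq
          rw [Multiset.card_add, hcardM j] at this
          have := Multiset.card_pos.2 hne_q
          omega
        · rintro ⟨hxq, -⟩
          have := congrArg Multiset.card hxq
          rw [Multiset.card_add, hcardM j] at this
          omega
        · exact (inter_eq_self_of_le' (hAle (2*m+1 - (j+1)) hq2m)).symm
        · rw [← hq1, heq_q, heq_q', add_assoc, add_assoc,
            add_comm (Ad' (2*m+1 - (j+1))) (Ad (2*m+1 - (j+1)))]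
      · -- final red step : j = m
        have hjm' : j = m := by omega
        subst hjm'
        rw [if_neg hc, if_neg hc, if_neg hc]
        rw [(show 2*m+1 - m = m + 1 by omega)]
        have hj2m' : m ≤ 2*m := by omega
        have hA'leM : Ad' m ≤ M (m+1) := hA'le m hj2m'
        refine ⟨⟨(hbalMM m (m+1)).add Balanced.rfl, hA'ne m hj2m', sep_toFinset _ _ _,
          hbalMM m (m+1), Balanced.rfl, ?_, ?_, ?_, rfl, rfl⟩, trivial, by omega⟩
        · rintro ⟨hxq, -⟩
          have := congrArg Multiset.card hxq
          rw [Multiset.card_add, hcardM m] at this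
          have := Multiset.card_pos.2 (hA'ne m hj2m')
          omega
        · rintro ⟨hxq, -⟩
          have := congrArg Multiset.card hxq
          rw [Multiset.card_add, hcardM m] at this
          omega
        · exact (inter_eq_self_of_le' hA'leM).symm
    · -- Wb i = G2b i
      by_cases hc : j + 1 ≤ m
      · rw [if_pos hc]
      · have hjm' : j = m := by omega
        subst hjm'
        rw [if_neg hc]
    · -- Wr i = U1r i
      trivial
  · -- final condition
    left
    simp only [Nat.add_sub_cancel]
    rw [if_neg (by omega : ¬ m + 1 ≤ m)]
    rw [inter_eq_self_of_le (le_refl _)]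
    exact hA'ne m (by omega)


/-- For a `k`-uniform hypergraph `H` and `d ≥ 2`, the toric ideal `I_H` is
generated in degree at most `d` iff for every primitive balanced edge set `(B, R)` with
`|B| = |R| = n > d` either (i) there is a proper splitting set of `(B, R)`, or (ii) there is a
finite sequence of pairs of blue and red splitting sets of size less than `n` as in the
criterion, ending in a pair sharing an edge or in a walk with a proper splitting set. -/
theorem toricIdeal_genInDeg_iff_splitting_criterion
    (K : Type) [Field K] (V : Type) [Fintype V] [DecidableEq V]
    (k d : ℕ) (hd : 2 ≤ d)
    (E : Finset (Finset V)) (hE : ∀ e ∈ E, e.Nonempty)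
    (hunif : ∀ e ∈ E, e.card = k) :
    GenInDegLE K (toricIdeal K V E) d ↔
      ∀ (B R : Multiset (Edge V E)) (n : ℕ),
        Primitive V E B R → Multiset.card B = n → Multiset.card R = n → d < n →
        ((∃ S : Multiset (Edge V E), ProperSplittingSet V E B R S) ∨
          (∃ N : ℕ, 1 ≤ N ∧
            ∃ Wb Wr S T G1b G1r G2b G2r U1b U1r U2b U2r : ℕ → Multiset (Edge V E),
              Wb 0 = B ∧ Wr 0 = R ∧
              (∀ i : ℕ, 1 ≤ i → i ≤ N →
                (SplittingSetWith V E (Wb (i - 1)) (Wr (i - 1)) (S i)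
                    (G1b i) (G1r i) (G2b i) (G2r i) ∧
                  G1r i = S i ∧ Multiset.card (S i) < n) ∧
                (SplittingSetWith V E (Wb (i - 1)) (Wr (i - 1)) (T i)
                    (U1b i) (U1r i) (U2b i) (U2r i) ∧
                  U2b i = T i ∧ Multiset.card (T i) < n) ∧
                Wb i = G2b i ∧ Wr i = U1r i) ∧
              (S N ∩ T N ≠ 0 ∨
                ∃ P : Multiset (Edge V E), ProperSplittingSet V E (Wb N) (Wr N) P))) := by
  constructor
  · -- necessity: from generation in low degree, construct the walk data
    intro hgen B R n hprim hcb hcr hn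
    right
    have hmem : binom K V E B R ∈
        Ideal.span {f | f ∈ toricIdeal K V E ∧ f.totalDegree ≤ d} := by
      rw [← hgen]
      exact binom_mem_ker hprim.1
    have hconn := connect hmem
    have hrtgF := eqv_to_rtg (rel_symm (E := E) (d := d)) hconn
    have hrtgM := rtg_transfer hE hrtgF
    rw [toMultiset_toFinsupp, toMultiset_toFinsupp] at hrtgM
    exact walk_to_witness hE hunif hd hprim hcb hcr hn hrtgM
  · -- sufficiency
    intro Hyp
    rw [GenInDegLE]
    refine le_antisymm ?_ ?_
    · exact toricIdeal_le_span fun B R hbal =>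
        descent hE hunif hd Hyp (Multiset.card B) B R hbal rfl
    · rw [Ideal.span_le]
      exact fun f hf => hf.1


end ToricHG
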